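/- The operator Ī (the unconditional null/superhedging operator Ī_0) is isotone (f ≤ g implies Īf ≤ Īg), positively homogeneous (Ī(cf) = c·Īf for c > 0), countably subadditive (Ī(Σ_{n} f_n) ≤ Σ_n Ī f_n for nonnegative f_n), and satisfies Ī(1_𝒮) ≤ 1. -/

import Mathlib

open Filter Set
open scoped Classical ENNReal

noncomputable section

abbrev Traj := ℕ → ℝ

/-- Portfolio value `Π^{V,H}_{j,n}`. -/
def PiVal (j n : ℕ) (V : ℝ) (H : ℕ → Traj → ℝ) (y : Traj) : ℝ :=
  V + ∑ i ∈ Finset.Ico j n, H i y * (y (i + 1) - y i)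

/-- Non-anticipativity of a sequence of functions on a set of trajectories. -/
def NonAnticipOn (A : Set Traj) (H : ℕ → Traj → ℝ) : Prop :=
  ∀ i, ∀ x ∈ A, ∀ y ∈ A, (∀ k ≤ i, x k = y k) → H i x = H i y

/-- Non-anticipativity (at time `j`) of a single extended-real-valued function. -/
def NonAnticipF (A : Set Traj) (j : ℕ) (g : Traj → EReal) : Prop :=
  ∀ x ∈ A, ∀ y ∈ A, (∀ k ≤ j, x k = y k) → g x = g y

/-- Conditional space `𝒮_{(x,j)}`. -/
def Cond (𝒮 : Set Traj) (x : Traj) (j : ℕ) : Set Traj :=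
  {y ∈ 𝒮 | ∀ i ≤ j, y i = x i}

/-- `liminf_{n→∞} Π^{V,H}_{j,n}` as a value in `[0,∞]`. -/
def limInfVal (j : ℕ) (V : ℝ) (H : ℕ → Traj → ℝ) (y : Traj) : ℝ≥0∞ :=
  Filter.liminf (fun n => ENNReal.ofReal (PiVal j n V H y)) Filter.atTop

/-- The conditional null operator `Ī_j` on a set `A` of trajectories. -/
def IUpOn (A : Set Traj) (j : ℕ) (f : Traj → ℝ≥0∞) : ℝ≥0∞ :=
  sInf { c | ∃ (V : ℕ → ℝ) (H : ℕ → ℕ → Traj → ℝ),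
    (∀ m, NonAnticipOn A (H m)) ∧
    (∀ m n, ∀ y ∈ A, 0 ≤ PiVal j n (V m) (H m) y) ∧
    (∀ y ∈ A, f y ≤ ∑' m, limInfVal j (V m) (H m) y) ∧
    c = ∑' m, ENNReal.ofReal (V m) }

/-- `Ī_j f (x)`, conditioned on the node `(x,j)`. -/
def IUp (𝒮 : Set Traj) (j : ℕ) (f : Traj → ℝ≥0∞) (x : Traj) : ℝ≥0∞ :=
  IUpOn (Cond 𝒮 x j) j f

/-- The conditional superhedging outer integral on a set `A`, starting at time `j`. -/
def sigmaUpOn (A : Set Traj) (j : ℕ) (f : Traj → EReal) : EReal :=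
  sInf { c : EReal | ∃ (V0 : ℝ) (H0 : ℕ → Traj → ℝ) (n0 : ℕ) (V : ℕ → ℝ)
      (H : ℕ → ℕ → Traj → ℝ),
    NonAnticipOn A H0 ∧ (∀ m, NonAnticipOn A (H m)) ∧
    (∀ m n, ∀ y ∈ A, 0 ≤ PiVal j n (V m) (H m) y) ∧
    (∀ y ∈ A, f y ≤ (PiVal j n0 V0 H0 y : EReal) +
      ((∑' m, limInfVal j (V m) (H m) y : ℝ≥0∞) : EReal)) ∧
    c = (V0 : EReal) + ((∑' m, ENNReal.ofReal (V m) : ℝ≥0∞) : EReal) }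

/-- `σ̄_j f (x)`. -/
def sigmaUp (𝒮 : Set Traj) (j : ℕ) (f : Traj → EReal) (x : Traj) : EReal :=
  sigmaUpOn (Cond 𝒮 x j) j f

/-- `σ̲_j f (x) = -σ̄_j (-f)(x)`. -/
def sigmaDown (𝒮 : Set Traj) (j : ℕ) (f : Traj → EReal) (x : Traj) : EReal :=
  - sigmaUp 𝒮 j (fun y => - f y) x

/-- A set is `Ī`-null. -/
def NullSet (𝒮 : Set Traj) (E : Set Traj) : Prop :=
  IUpOn 𝒮 0 (fun y => if y ∈ E then 1 else 0) = 0

/-- A property holds `Ī`-almost everywhere on `𝒮`. -/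
def AEOn (𝒮 : Set Traj) (P : Traj → Prop) : Prop :=
  NullSet 𝒮 {y ∈ 𝒮 | ¬ P y}

/-- Property `(L_{(x,j)})`, continuity from below at the node `(x,j)`. -/
def PropL (𝒮 : Set Traj) (x : Traj) (j : ℕ) : Prop :=
  ∀ (V0 : ℝ) (H0 : ℕ → Traj → ℝ) (n0 : ℕ) (V : ℕ → ℝ) (H : ℕ → ℕ → Traj → ℝ),
    NonAnticipOn (Cond 𝒮 x j) H0 → (∀ m, NonAnticipOn (Cond 𝒮 x j) (H m)) →
    (∀ m n, ∀ y ∈ Cond 𝒮 x j, 0 ≤ PiVal j n (V m) (H m) y) →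
    (∀ y ∈ Cond 𝒮 x j, (PiVal j n0 V0 H0 y : EReal) ≤
      ((∑' m, limInfVal j (V m) (H m) y : ℝ≥0∞) : EReal)) →
    (V0 : EReal) ≤ ((∑' m, ENNReal.ofReal (V m) : ℝ≥0∞) : EReal)

/-- Assumption `(L)`-a.e. -/
def LaeAssumption (𝒮 : Set Traj) : Prop :=
  (∀ x ∈ 𝒮, PropL 𝒮 x 0) ∧ NullSet 𝒮 {x ∈ 𝒮 | ∃ j, ¬ PropL 𝒮 x j}

/-- Up-down node. -/
def UpDownNode (𝒮 : Set Traj) (x : Traj) (j : ℕ) : Prop :=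
  (∃ y ∈ Cond 𝒮 x j, x j < y (j + 1)) ∧ (∃ y ∈ Cond 𝒮 x j, y (j + 1) < x j)

/-- Flat node. -/
def FlatNode (𝒮 : Set Traj) (x : Traj) (j : ℕ) : Prop :=
  ∀ y ∈ Cond 𝒮 x j, y (j + 1) = x j

/-- Arbitrage node. -/
def ArbitrageNode (𝒮 : Set Traj) (x : Traj) (j : ℕ) : Prop :=
  ¬ UpDownNode 𝒮 x j ∧ ¬ FlatNode 𝒮 x j

/-- Type II arbitrage node. -/
def TypeIINode (𝒮 : Set Traj) (x : Traj) (j : ℕ) : Prop :=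
  ArbitrageNode 𝒮 x j ∧ ¬ ∃ y ∈ Cond 𝒮 x j, y (j + 1) = x j

/-- Trajectory based stopping time. -/
def StoppingTime (𝒮 : Set Traj) (τ : Traj → ℕ∞) : Prop :=
  ∀ x ∈ 𝒮, ∀ y ∈ 𝒮, (∀ k : ℕ, (k : ℕ∞) ≤ τ x → x k = y k) → τ x = τ y

/-- `⊤`-dominant addition on `EReal`, implementing the convention `∞ + (−∞) = ∞`. -/
def eadd (a b : EReal) : EReal := if a = ⊤ ∨ b = ⊤ then ⊤ else a + b

/-- Subtraction `u − v = u + (−v)` with the convention `∞ + (−∞) = ∞`. -/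
def esub (a b : EReal) : EReal := eadd a (-b)

/-- Supermartingale. -/
def TrajSupermartingale (𝒮 : Set Traj) (f : ℕ → Traj → EReal) : Prop :=
  (∀ j, NonAnticipF 𝒮 j (f j)) ∧
  ∀ j, AEOn 𝒮 (fun x => sigmaUp 𝒮 j (f (j + 1)) x ≤ f j x)

-- helpers
lemma liminf_const_mul' (c : ℝ≥0∞) (hc : c ≠ ∞) (u : ℕ → ℝ≥0∞) :
    Filter.liminf (fun n => c * u n) Filter.atTop = c * Filter.liminf u Filter.atTop := by
  have hm : Monotone (fun x : ℝ≥0∞ => c * x) := fun a b hab => mul_le_mul_right hab c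
  exact (hm.map_liminf_of_continuousAt (F := atTop) u
    ((ENNReal.continuous_const_mul hc).continuousAt)).symm

lemma PiVal_smul (c : ℝ) (j n : ℕ) (V : ℝ) (H : ℕ → Traj → ℝ) (y : Traj) :
    PiVal j n (c * V) (fun i z => c * H i z) y = c * PiVal j n V H y := by
  simp only [PiVal, mul_add, Finset.mul_sum]
  congr 1
  exact Finset.sum_congr rfl fun i _ => by ring

lemma limInfVal_smul {c : ℝ} (hc : 0 ≤ c) (j : ℕ) (V : ℝ) (H : ℕ → Traj → ℝ) (y : Traj) :
    limInfVal j (c * V) (fun i z => c * H i z) y = ENNReal.ofReal c * limInfVal j V H y := by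
  unfold limInfVal
  rw [← liminf_const_mul' _ ENNReal.ofReal_ne_top]
  congr 1
  funext n
  rw [PiVal_smul, ENNReal.ofReal_mul hc]

lemma IUpOn_scale_le (𝒮 : Set Traj) {c : ℝ} (hc : 0 < c) (f : Traj → ℝ≥0∞) :
    IUpOn 𝒮 0 (fun y => ENNReal.ofReal c * f y) ≤ ENNReal.ofReal c * IUpOn 𝒮 0 f := by
  set c' := ENNReal.ofReal c with hc'
  have hc0 : c' ≠ 0 := (ENNReal.ofReal_pos.2 hc).ne'
  have hct : c' ≠ ∞ := ENNReal.ofReal_ne_top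
  -- membership transfer
  have key : ∀ b ∈ { x | ∃ (V : ℕ → ℝ) (H : ℕ → ℕ → Traj → ℝ),
      (∀ m, NonAnticipOn 𝒮 (H m)) ∧
      (∀ m n, ∀ y ∈ 𝒮, 0 ≤ PiVal 0 n (V m) (H m) y) ∧
      (∀ y ∈ 𝒮, f y ≤ ∑' m, limInfVal 0 (V m) (H m) y) ∧
      x = ∑' m, ENNReal.ofReal (V m) },
      IUpOn 𝒮 0 (fun y => c' * f y) ≤ c' * b := by
    rintro b ⟨V, H, hNA, hPos, hHedge, rfl⟩
    refine sInf_le ⟨fun m => c * V m, fun m i z => c * H m i z, ?_, ?_, ?_, ?_⟩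
    · intro m i x hx y hy hk
      show c * H m i x = c * H m i y
      rw [hNA m i x hx y hy hk]
    · intro m n y hy
      rw [PiVal_smul]
      exact mul_nonneg hc.le (hPos m n y hy)
    · intro y hy
      calc c' * f y ≤ c' * ∑' m, limInfVal 0 (V m) (H m) y :=
            mul_le_mul_right (hHedge y hy) c'
        _ = ∑' m, c' * limInfVal 0 (V m) (H m) y := (ENNReal.tsum_mul_left).symm
        _ = ∑' m, limInfVal 0 (c * V m) (fun i z => c * H m i z) y := by
            refine tsum_congr fun m => ?_
            rw [limInfVal_smul hc.le]
    · rw [← ENNReal.tsum_mul_left]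
      refine tsum_congr fun m => ?_
      show c' * ENNReal.ofReal (V m) = ENNReal.ofReal (c * V m)
      exact (ENNReal.ofReal_mul hc.le).symm
  -- conclude
  have hdiv : IUpOn 𝒮 0 (fun y => c' * f y) / c' ≤ IUpOn 𝒮 0 f := by
    refine le_sInf fun b hb => ?_
    rw [ENNReal.div_le_iff_le_mul (Or.inl hc0) (Or.inl hct)]
    rw [mul_comm]
    exact key b hb
  calc IUpOn 𝒮 0 (fun y => c' * f y)
      = c' * (IUpOn 𝒮 0 (fun y => c' * f y) / c') := (ENNReal.mul_div_cancel hc0 hct).symm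
    _ ≤ c' * IUpOn 𝒮 0 f := mul_le_mul_right hdiv c'

/-- `Ī` is isotone, positively homogeneous, countably subadditive,
and `Ī(1_𝒮) ≤ 1`. -/
theorem IUp_basic_properties (𝒮 : Set Traj) :
    (∀ f g : Traj → ℝ≥0∞, (∀ y ∈ 𝒮, f y ≤ g y) → IUpOn 𝒮 0 f ≤ IUpOn 𝒮 0 g) ∧
    (∀ c : ℝ, 0 < c → ∀ f : Traj → ℝ≥0∞,
      IUpOn 𝒮 0 (fun y => ENNReal.ofReal c * f y) = ENNReal.ofReal c * IUpOn 𝒮 0 f) ∧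
    (∀ F : ℕ → Traj → ℝ≥0∞,
      IUpOn 𝒮 0 (fun y => ∑' n, F n y) ≤ ∑' n, IUpOn 𝒮 0 (F n)) ∧
    IUpOn 𝒮 0 (fun _ => 1) ≤ 1 := by
  refine ⟨?_, ?_, ?_, ?_⟩
  · -- isotone
    intro f g hfg
    refine sInf_le_sInf ?_
    rintro b ⟨V, H, hNA, hPos, hHedge, rfl⟩
    exact ⟨V, H, hNA, hPos, fun y hy => (hfg y hy).trans (hHedge y hy), rfl⟩
  · -- positive homogeneity
    intro c hc f
    refine le_antisymm (IUpOn_scale_le 𝒮 hc f) ?_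
    have h2 := IUpOn_scale_le 𝒮 (one_div_pos.2 hc) (fun y => ENNReal.ofReal c * f y)
    have hmulinv : ENNReal.ofReal (1 / c) * ENNReal.ofReal c = 1 := by
      rw [← ENNReal.ofReal_mul (by positivity), one_div_mul_cancel hc.ne', ENNReal.ofReal_one]
    have hfe : (fun y => ENNReal.ofReal (1 / c) * (ENNReal.ofReal c * f y)) = f := by
      funext y; rw [← mul_assoc, hmulinv, one_mul]
    rw [hfe] at h2
    calc ENNReal.ofReal c * IUpOn 𝒮 0 f
        ≤ ENNReal.ofReal c * (ENNReal.ofReal (1 / c) * IUpOn 𝒮 0 (fun y => ENNReal.ofReal c * f y)) :=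
          mul_le_mul_right h2 _
      _ = IUpOn 𝒮 0 (fun y => ENNReal.ofReal c * f y) := by
          rw [← mul_assoc, mul_comm (ENNReal.ofReal c), hmulinv, one_mul]
  · -- countable subadditivity
    intro F
    by_cases hI : ∑' n, IUpOn 𝒮 0 (F n) = ∞
    · rw [hI]; exact le_top
    refine ENNReal.le_of_forall_pos_le_add fun ε hε _ => ?_
    obtain ⟨ε', hε'pos, hε'sum⟩ :=
      ENNReal.exists_pos_sum_of_countable (ε := ε) (by exact_mod_cast hε.ne') ℕ
    have key : ∀ n, ∃ (V : ℕ → ℝ) (H : ℕ → ℕ → Traj → ℝ),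
        (∀ m, NonAnticipOn 𝒮 (H m)) ∧
        (∀ m k, ∀ y ∈ 𝒮, 0 ≤ PiVal 0 k (V m) (H m) y) ∧
        (∀ y ∈ 𝒮, F n y ≤ ∑' m, limInfVal 0 (V m) (H m) y) ∧
        (∑' m, ENNReal.ofReal (V m)) ≤ IUpOn 𝒮 0 (F n) + ε' n := by
      intro n
      have hne : IUpOn 𝒮 0 (F n) ≠ ∞ := ENNReal.ne_top_of_tsum_ne_top hI n
      have hlt : IUpOn 𝒮 0 (F n) < IUpOn 𝒮 0 (F n) + ε' n :=
        ENNReal.lt_add_right hne (by exact_mod_cast (hε'pos n).ne')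
      rw [IUpOn] at hlt
      obtain ⟨b, hb, hblt⟩ := sInf_lt_iff.1 hlt
      obtain ⟨V, H, hNA, hPos, hHedge, rfl⟩ := hb
      exact ⟨V, H, hNA, hPos, hHedge, hblt.le⟩
    choose V H hNA hPos hHedge hCost using key
    set e : ℕ ≃ ℕ × ℕ := (Denumerable.eqv (ℕ × ℕ)).symm with he
    have hmem : IUpOn 𝒮 0 (fun y => ∑' n, F n y) ≤
        ∑' k, ENNReal.ofReal (V (e k).1 (e k).2) := by
      refine sInf_le ⟨fun k => V (e k).1 (e k).2, fun k => H (e k).1 (e k).2, ?_, ?_, ?_, rfl⟩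
      · intro k; exact hNA (e k).1 (e k).2
      · intro k n y hy; exact hPos (e k).1 (e k).2 n y hy
      · intro y hy
        have h1 : ∑' n, F n y ≤ ∑' n, ∑' m, limInfVal 0 (V n m) (H n m) y :=
          ENNReal.tsum_le_tsum fun n => hHedge n y hy
        have h2 : ∑' (p : ℕ × ℕ), limInfVal 0 (V p.1 p.2) (H p.1 p.2) y =
            ∑' n, ∑' m, limInfVal 0 (V n m) (H n m) y := ENNReal.tsum_prod (f := fun a b => limInfVal 0 (V a b) (H a b) y)
        have h3 : ∑' k, limInfVal 0 (V (e k).1 (e k).2) (H (e k).1 (e k).2) y =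
            ∑' (p : ℕ × ℕ), limInfVal 0 (V p.1 p.2) (H p.1 p.2) y :=
          e.tsum_eq (fun p => limInfVal 0 (V p.1 p.2) (H p.1 p.2) y)
        rw [h3, h2]; exact h1
    have hcost : ∑' k, ENNReal.ofReal (V (e k).1 (e k).2) ≤
        (∑' n, IUpOn 𝒮 0 (F n)) + ε := by
      have h3 : ∑' k, ENNReal.ofReal (V (e k).1 (e k).2) =
          ∑' (p : ℕ × ℕ), ENNReal.ofReal (V p.1 p.2) :=
        e.tsum_eq (fun p => ENNReal.ofReal (V p.1 p.2))
      rw [h3, ENNReal.tsum_prod (f := fun a b => ENNReal.ofReal (V a b))]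
      calc ∑' n, ∑' m, ENNReal.ofReal (V n m)
          ≤ ∑' n, (IUpOn 𝒮 0 (F n) + ε' n) := ENNReal.tsum_le_tsum fun n => hCost n
        _ = (∑' n, IUpOn 𝒮 0 (F n)) + ∑' n, (ε' n : ℝ≥0∞) := ENNReal.tsum_add
        _ ≤ (∑' n, IUpOn 𝒮 0 (F n)) + ε := add_le_add_right hε'sum.le _
    exact hmem.trans hcost
  · -- Ī(1) ≤ 1
    have htsum : ∑' m, ENNReal.ofReal (if m = 0 then (1 : ℝ) else 0) = 1 := by
      have : ∀ m, ENNReal.ofReal (if m = 0 then (1 : ℝ) else 0) =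
          if m = 0 then (1 : ℝ≥0∞) else 0 := by
        intro m; split <;> simp
      rw [tsum_congr this, tsum_ite_eq]
    refine sInf_le ⟨fun m => if m = 0 then 1 else 0, fun _ _ _ => 0, ?_, ?_, ?_, htsum.symm⟩
    · intro m i x _ y _ _; rfl
    · intro m n y _
      simp only [PiVal, zero_mul, Finset.sum_const_zero, add_zero]
      split <;> norm_num
    · intro y _
      have hlim : ∀ m, limInfVal 0 (if m = 0 then (1:ℝ) else 0) (fun _ _ => 0) y =
          ENNReal.ofReal (if m = 0 then (1:ℝ) else 0) := by
        intro m
        unfold limInfVal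
        simp only [PiVal, zero_mul, Finset.sum_const_zero, add_zero]
        exact liminf_const _
      rw [tsum_congr hlim, htsum]

end
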